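/- arXiv:2510.00343 — 2 statements merged into one kernel-verified Lean document; each statement's English description precedes it below -/
import Mathlib

section
/- For all n ≥ 1 and m ≥ 1, the expected number of inversions after an m-shelf shuffle of n cards is E[I_{n,m}] = n(n−1)/4. -/
open MeasureTheory ProbabilityTheory Finset Filter

/-- The uniform probability measure on a finite type. -/
noncomputable def uniformM (α : Type*) [Fintype α] [MeasurableSpace α] : Measure α :=
  ((Fintype.card α : ENNReal))⁻¹ • Measure.count

/-- The pile label (in `{1, …, 2m}`) of card `i` under the pile assignment `w`
(pile indices in `Fin (2*m)` are 0-based, so pile `k` carries label `k + 1`).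
Under the uniform measure on words, `fun w => Xval w i` are i.i.d. uniform on `{1, …, 2m}`. -/
def Xval {m n : ℕ} (w : Fin n → Fin (2*m)) (i : Fin n) : ℕ := (w i : ℕ) + 1

/-- Sorting key of card `i` in an `m`-shelf shuffle with pile assignment `w`:
cards are ordered first by pile label; within an odd-labeled pile they keep their
increasing order, and within an even-labeled pile their order is reversed. -/
noncomputable def shelfKey {m n : ℕ} (w : Fin n → Fin (2*m)) (i : Fin n) :
    Lex (Fin (2*m) × ℤ) :=
  toLex (w i, if Even (Xval w i) then -(i : ℤ) else (i : ℤ))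

/-- The permutation of `{1, …, n}` (0-based: of `Fin n`) produced by an `m`-shelf shuffle
with pile assignment `w`: position `p` of the shuffled deck holds card `shelfPerm w p`. -/
noncomputable def shelfPerm {m n : ℕ} (w : Fin n → Fin (2*m)) : Equiv.Perm (Fin n) :=
  Tuple.sort (shelfKey w)

/-- The number of inversions of a permutation: pairs `i < j` with `π i > π j`. -/
def invCount {n : ℕ} (π : Equiv.Perm (Fin n)) : ℕ :=
  ((Finset.univ : Finset (Fin n × Fin n)).filter
    (fun p => p.1 < p.2 ∧ π p.2 < π p.1)).card

/-- `I_{n,m}`: the number of inversions after an `m`-shelf shuffle of `n` cards,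
as a random variable on the space of pile-assignment words. -/
noncomputable def shelfInv (m n : ℕ) (w : Fin n → Fin (2*m)) : ℕ := invCount (shelfPerm w)

-- aux: invCount of sort equals inversions of key
theorem invCount_sort {n : ℕ} {α : Type*} [LinearOrder α] (f : Fin n → α)
    (hf : Function.Injective f) :
    ((Finset.univ : Finset (Fin n × Fin n)).filter
      (fun p => p.1 < p.2 ∧ (Tuple.sort f) p.2 < (Tuple.sort f) p.1)).card
    = ((Finset.univ : Finset (Fin n × Fin n)).filter
      (fun p => p.1 < p.2 ∧ f p.2 < f p.1)).card := by
  set σ := Tuple.sort f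
  have hmono : StrictMono (f ∘ σ) :=
    (Tuple.monotone_sort f).strictMono_of_injective (hf.comp σ.injective)
  apply Finset.card_bij (fun p _ => (σ p.2, σ p.1))
  · rintro ⟨p, q⟩ hp
    simp only [Finset.mem_filter, Finset.mem_univ, true_and] at hp ⊢
    exact ⟨hp.2, hmono hp.1⟩
  · rintro ⟨p, q⟩ hp ⟨p', q'⟩ hp' h
    simp only [Prod.mk.injEq] at h
    exact Prod.ext (σ.injective h.2) (σ.injective h.1)
  · rintro ⟨a, b⟩ hab
    simp only [Finset.mem_filter, Finset.mem_univ, true_and] at hab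
    refine ⟨(σ.symm b, σ.symm a), ?_, by simp⟩
    simp only [Finset.mem_filter, Finset.mem_univ, true_and, Equiv.apply_symm_apply]
    refine ⟨?_, hab.1⟩
    have : f (σ (σ.symm b)) < f (σ (σ.symm a)) := by simpa using hab.2
    exact hmono.lt_iff_lt.mp this

theorem shelfKey_inj {m n : ℕ} (w : Fin n → Fin (2*m)) :
    Function.Injective (shelfKey w) := by
  intro i j h
  unfold shelfKey at h
  have h1 : w i = w j := congrArg (fun x => (ofLex x).1) h
  have h2 : (if Even (Xval w i) then -(i : ℤ) else (i : ℤ))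
      = (if Even (Xval w j) then -(j : ℤ) else (j : ℤ)) := congrArg (fun x => (ofLex x).2) h
  have hx : Xval w i = Xval w j := by unfold Xval; rw [h1]
  rw [hx] at h2
  have : (i : ℤ) = (j : ℤ) := by
    by_cases he : Even (Xval w j) <;> simp [he] at h2 <;> omega
  exact Fin.ext (by exact_mod_cast this)

theorem shelfKey_lt_iff {m n : ℕ} (w : Fin n → Fin (2*m)) {a b : Fin n} (hab : a < b) :
    (shelfKey w b < shelfKey w a ↔ (w b < w a ∨ (w a = w b ∧ Odd (w a : ℕ)))) := by
  unfold shelfKey Xval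
  rw [Prod.Lex.lt_iff]
  constructor
  · rintro (h | ⟨h1, h2⟩)
    · exact Or.inl h
    · simp only [ofLex_toLex] at h1 h2
      refine Or.inr ⟨h1.symm, ?_⟩
      rw [h1] at h2
      by_cases he : Even ((w a : ℕ) + 1)
      · simp [he] at h2; simpa [Nat.even_add_one, Nat.not_even_iff_odd] using he
      · simp [he] at h2
        have := Fin.lt_iff_val_lt_val.mp hab
        omega
  · rintro (h | ⟨h1, h2⟩)
    · exact Or.inl h
    · simp only [ofLex_toLex]
      refine Or.inr ⟨h1.symm, ?_⟩
      rw [← h1]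
      have he : Even ((w a : ℕ) + 1) := by simpa [Nat.even_add_one, Nat.not_even_iff_odd] using h2
      simp [he]
      exact_mod_cast Fin.lt_iff_val_lt_val.mp hab

theorem pair_count {m n : ℕ} (a b : Fin n) :
    2 * ((Finset.univ : Finset (Fin n → Fin (2*m))).filter
      (fun w => w b < w a ∨ (w a = w b ∧ Odd (w a : ℕ)))).card = (2*m)^n := by
  set C : (Fin n → Fin (2*m)) → Prop :=
    fun w => w b < w a ∨ (w a = w b ∧ Odd (w a : ℕ)) with hC
  have key : ∀ x y : Fin (2*m),
      (y < x ∨ (x = y ∧ Odd (x : ℕ))) ↔ ¬ (y.rev < x.rev ∨ (x.rev = y.rev ∧ Odd ((x.rev : ℕ)))) := by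
    intro x y
    have hx := x.2; have hy := y.2
    simp only [Fin.lt_iff_val_lt_val, Fin.ext_iff, Fin.val_rev, Nat.odd_iff]
    omega
  have hrev : ∀ w : Fin n → Fin (2*m), C w ↔ ¬ C (fun i => (w i).rev) :=
    fun w => key (w a) (w b)
  have hcard : (univ.filter C).card = (univ.filter (fun w => ¬ C w)).card := by
    apply Finset.card_bij (fun w _ => fun i => (w i).rev)
    · intro w hw
      simp only [mem_filter, mem_univ, true_and] at hw ⊢
      exact (hrev w).mp hw
    · intro w _ w' _ h
      funext i
      have := congrFun h i
      simpa [Fin.rev_inj] using this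
    · intro v hv
      simp only [mem_filter, mem_univ, true_and] at hv
      refine ⟨fun i => (v i).rev, ?_, by simp⟩
      simp only [mem_filter, mem_univ, true_and]
      rw [hrev (fun i => (v i).rev)]
      simpa [Fin.rev_rev] using hv
  have htot : (univ.filter C).card + (univ.filter (fun w => ¬ C w)).card = (2*m)^n := by
    rw [Finset.card_filter_add_card_filter_not]
    simp [Fintype.card_fun]
  rw [hcard] at htot ⊢
  omega

theorem pairs_card (n : ℕ) :
    2 * ((Finset.univ : Finset (Fin n × Fin n)).filter (fun p => p.1 < p.2)).card
      = n * n - n := by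
  have hswap : ((univ : Finset (Fin n × Fin n)).filter (fun p => p.1 < p.2)).card
      = ((univ : Finset (Fin n × Fin n)).filter (fun p => p.2 < p.1)).card := by
    apply Finset.card_bij (fun p _ => (p.2, p.1))
    · intro p hp; simp only [mem_filter, mem_univ, true_and] at hp ⊢; exact hp
    · rintro ⟨a,b⟩ _ ⟨c,d⟩ _ h
      simp only [Prod.mk.injEq] at h
      simp [h.1, h.2]
    · rintro ⟨a,b⟩ hb
      simp only [mem_filter, mem_univ, true_and] at hb
      exact ⟨(b,a), by simpa using hb, rfl⟩
  have hne : ((univ : Finset (Fin n × Fin n)).filter (fun p => p.1 ≠ p.2)).card = n * n - n := by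
    have : ((univ : Finset (Fin n × Fin n)).filter (fun p => p.1 = p.2)).card = n := by
      rw [show ((univ : Finset (Fin n × Fin n)).filter (fun p => p.1 = p.2))
          = univ.image (fun i : Fin n => (i, i)) by
        ext ⟨a,b⟩
        simp only [mem_filter, mem_univ, true_and, mem_image]
        aesop]
      rw [Finset.card_image_of_injective _ (fun i j h => by simpa using (Prod.mk.injEq _ _ _ _ ▸ h).1)]
      simp
    have h2 := Finset.card_filter_add_card_filter_not
      (s := (univ : Finset (Fin n × Fin n))) (p := fun p => p.1 = p.2)
    simp only [Finset.card_univ, Fintype.card_prod, Fintype.card_fin] at h2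
    have h3 : ((univ : Finset (Fin n × Fin n)).filter (fun p => ¬ p.1 = p.2)).card
        = ((univ : Finset (Fin n × Fin n)).filter (fun p => p.1 ≠ p.2)).card := by rfl
    omega
  have hsplit : ((univ : Finset (Fin n × Fin n)).filter (fun p => p.1 < p.2)).card
      + ((univ : Finset (Fin n × Fin n)).filter (fun p => p.2 < p.1)).card
      = ((univ : Finset (Fin n × Fin n)).filter (fun p => p.1 ≠ p.2)).card := by
    rw [← Finset.card_union_of_disjoint]
    · congr 1
      ext p
      simp only [mem_union, mem_filter, mem_univ, true_and, ne_eq]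
      constructor
      · rintro (h | h); exacts [ne_of_lt h, ne_of_gt h]
      · intro h; exact lt_or_gt_of_ne h
    · rw [Finset.disjoint_filter]
      intro p _ h1
      exact fun h2 => absurd h1 (asymm h2)
  omega

theorem sum_shelfInv (n m : ℕ) :
    4 * ∑ w : Fin n → Fin (2*m), shelfInv m n w = (n * n - n) * (2*m)^n := by
  have step1 : ∀ w : Fin n → Fin (2*m), shelfInv m n w
      = ((Finset.univ : Finset (Fin n × Fin n)).filter
        (fun p => p.1 < p.2 ∧ shelfKey w p.2 < shelfKey w p.1)).card := by
    intro w
    exact invCount_sort (shelfKey w) (shelfKey_inj w)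
  have step2 : ∑ w : Fin n → Fin (2*m), shelfInv m n w
      = ∑ p ∈ (Finset.univ : Finset (Fin n × Fin n)).filter (fun p => p.1 < p.2),
          ((Finset.univ : Finset (Fin n → Fin (2*m))).filter
            (fun w => w p.2 < w p.1 ∨ (w p.1 = w p.2 ∧ Odd (w p.1 : ℕ)))).card := by
    calc ∑ w : Fin n → Fin (2*m), shelfInv m n w
        = ∑ w : Fin n → Fin (2*m), ∑ p : Fin n × Fin n,
            if p.1 < p.2 ∧ shelfKey w p.2 < shelfKey w p.1 then 1 else 0 := by
          refine Finset.sum_congr rfl fun w _ => ?_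
          rw [step1 w, Finset.card_filter]
      _ = ∑ p : Fin n × Fin n, ∑ w : Fin n → Fin (2*m),
            if p.1 < p.2 ∧ shelfKey w p.2 < shelfKey w p.1 then 1 else 0 :=
          Finset.sum_comm
      _ = ∑ p : Fin n × Fin n, if p.1 < p.2 then
            ((Finset.univ : Finset (Fin n → Fin (2*m))).filter
              (fun w => w p.2 < w p.1 ∨ (w p.1 = w p.2 ∧ Odd (w p.1 : ℕ)))).card else 0 := by
          refine Finset.sum_congr rfl fun p _ => ?_
          by_cases hp : p.1 < p.2
          · simp only [hp, if_true, true_and]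
            rw [Finset.card_filter]
            refine Finset.sum_congr rfl fun w _ => ?_
            rw [if_congr (shelfKey_lt_iff w hp) rfl rfl]
          · simp [hp]
      _ = _ := by rw [← Finset.sum_filter]
  have step3 : 2 * ∑ w : Fin n → Fin (2*m), shelfInv m n w
      = ((Finset.univ : Finset (Fin n × Fin n)).filter (fun p => p.1 < p.2)).card * (2*m)^n := by
    rw [step2, Finset.mul_sum]
    rw [Finset.sum_congr rfl (fun p _ => pair_count p.1 p.2)]
    rw [Finset.sum_const, smul_eq_mul]
  have h4 := pairs_card n
  calc 4 * ∑ w : Fin n → Fin (2*m), shelfInv m n w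
      = 2 * (2 * ∑ w : Fin n → Fin (2*m), shelfInv m n w) := by ring
    _ = 2 * (((Finset.univ : Finset (Fin n × Fin n)).filter (fun p => p.1 < p.2)).card * (2*m)^n) := by
        rw [step3]
    _ = (2 * ((Finset.univ : Finset (Fin n × Fin n)).filter (fun p => p.1 < p.2)).card) * (2*m)^n := by
        ring
    _ = (n * n - n) * (2*m)^n := by rw [h4]

/-- For all `n ≥ 1` and `m ≥ 1`, the expected number of inversions after
an `m`-shelf shuffle of `n` cards is `E[I_{n,m}] = n(n−1)/4`. -/
theorem shelf_inversions_mean (n m : ℕ) (hn : 1 ≤ n) (hm : 1 ≤ m) :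
    ∫ w, (shelfInv m n w : ℝ) ∂(uniformM (Fin n → Fin (2*m))) = n * (n - 1) / 4 := by
  have hc : Fintype.card (Fin n → Fin (2*m)) = (2*m)^n := by
    simp [Fintype.card_fun]
  rw [uniformM, integral_smul_measure,
    integral_fintype (Integrable.of_finite)]
  simp only [count_real_singleton, Measure.count_singleton, ENNReal.toReal_one, one_smul]
  have hsum : ∑ x : Fin n → Fin (2*m), (shelfInv m n x : ℝ)
      = ((∑ w : Fin n → Fin (2*m), shelfInv m n w : ℕ) : ℝ) := by
    push_cast; rfl
  rw [hsum, hc]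
  have htr : ((((2*m)^n : ℕ) : ENNReal))⁻¹.toReal = (((2*m)^n : ℕ) : ℝ)⁻¹ := by
    simp
  rw [htr, smul_eq_mul]
  have hkey := sum_shelfInv n m
  have hcast : (4 : ℝ) * ((∑ w : Fin n → Fin (2*m), shelfInv m n w : ℕ) : ℝ)
      = ((n * n - n : ℕ) : ℝ) * (((2*m)^n : ℕ) : ℝ) := by
    rw [← Nat.cast_ofNat, ← Nat.cast_mul, hkey, Nat.cast_mul]
  have hnn : ((n * n - n : ℕ) : ℝ) = (n : ℝ) * ((n : ℝ) - 1) := by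
    have : n ≤ n * n := Nat.le_mul_of_pos_left n (by omega)
    rw [Nat.cast_sub this]
    push_cast; ring
  have hcpos : (0 : ℝ) < (((2*m)^n : ℕ) : ℝ) := by
    have : 0 < (2*m)^n := Nat.pow_pos (by omega)
    exact_mod_cast this
  rw [hnn] at hcast
  rw [inv_mul_eq_div, div_eq_div_iff (ne_of_gt hcpos) (by norm_num)]
  linarith [hcast]
end

section
/- Let n ≥ 1, m ≥ 1, and let X_1,…,X_n be i.i.d. uniform on {1,…,2m}. Then the statistic C_{n,m} = Σ_{1≤i<k≤n} 1{X_i = X_k and X_i is even} satisfies Var(C_{n,m}) = n(n−1)(2n + 4m − 5) / (32 m²). -/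
open MeasureTheory ProbabilityTheory Finset Filter

section Split
variable {α β M : Type*} [Fintype α] [DecidableEq α] [Fintype β] [AddCommMonoid M]

lemma card_ne (i : α) : Fintype.card {j // j ≠ i} = Fintype.card α - 1 := by
  simp [Fintype.card_subtype_compl, Fintype.card_subtype_eq]

lemma sum_split_one (i : α) (F : β → ({j // j ≠ i} → β) → M) :
    ∑ w : α → β, F (w i) (fun j => w j) = ∑ a : β, ∑ v : {j // j ≠ i} → β, F a v := by
  rw [← Equiv.sum_comp (Equiv.funSplitAt i β).symm
    (fun w : α → β => F (w i) (fun j => w j)), Fintype.sum_prod_type]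
  refine Finset.sum_congr rfl fun a _ => Finset.sum_congr rfl fun v _ => ?_
  congr 1
  · simp
  · funext j
    simp [j.2]

lemma sum_apply_one (i : α) (f : β → M) :
    ∑ w : α → β, f (w i) = (Fintype.card β)^(Fintype.card α - 1) • ∑ a, f a := by
  rw [sum_split_one i (fun a _ => f a)]
  simp [Finset.sum_const, card_univ, Fintype.card_fun, card_ne, Finset.smul_sum]

lemma sum_apply_two {i k : α} (hik : i ≠ k) (f : β → β → M) :
    ∑ w : α → β, f (w i) (w k) = (Fintype.card β)^(Fintype.card α - 2) • ∑ a, ∑ b, f a b := by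
  rw [sum_split_one i (fun a v => f a (v ⟨k, Ne.symm hik⟩))]
  have : ∀ a : β, ∑ v : {j // j ≠ i} → β, f a (v ⟨k, Ne.symm hik⟩)
      = (Fintype.card β)^(Fintype.card α - 2) • ∑ b, f a b := by
    intro a
    rw [sum_apply_one (⟨k, Ne.symm hik⟩ : {j // j ≠ i}) (fun b => f a b), card_ne]
    norm_num [Nat.sub_sub]
  simp only [this, Finset.smul_sum]

lemma sum_apply_three {i k l : α} (hik : i ≠ k) (hil : i ≠ l) (hkl : k ≠ l)
    (f : β → β → β → M) :
    ∑ w : α → β, f (w i) (w k) (w l)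
      = (Fintype.card β)^(Fintype.card α - 3) • ∑ a, ∑ b, ∑ c, f a b c := by
  rw [sum_split_one i (fun a v => f a (v ⟨k, Ne.symm hik⟩) (v ⟨l, Ne.symm hil⟩))]
  have : ∀ a : β, ∑ v : {j // j ≠ i} → β, f a (v ⟨k, Ne.symm hik⟩) (v ⟨l, Ne.symm hil⟩)
      = (Fintype.card β)^(Fintype.card α - 3) • ∑ b, ∑ c, f a b c := by
    intro a
    rw [sum_apply_two (by simpa [Subtype.ext_iff] using hkl) (fun b c => f a b c), card_ne]
    norm_num [Nat.sub_sub]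
  simp only [this, Finset.smul_sum]

lemma sum_apply_four {i k j l : α} (hik : i ≠ k) (hij : i ≠ j) (hil : i ≠ l)
    (hkj : k ≠ j) (hkl : k ≠ l) (hjl : j ≠ l) (f : β → β → β → β → M) :
    ∑ w : α → β, f (w i) (w k) (w j) (w l)
      = (Fintype.card β)^(Fintype.card α - 4) • ∑ a, ∑ b, ∑ c, ∑ d, f a b c d := by
  rw [sum_split_one i (fun a v => f a (v ⟨k, Ne.symm hik⟩) (v ⟨j, Ne.symm hij⟩)
    (v ⟨l, Ne.symm hil⟩))]
  have : ∀ a : β, ∑ v : {x // x ≠ i} → β,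
        f a (v ⟨k, Ne.symm hik⟩) (v ⟨j, Ne.symm hij⟩) (v ⟨l, Ne.symm hil⟩)
      = (Fintype.card β)^(Fintype.card α - 4) • ∑ b, ∑ c, ∑ d, f a b c d := by
    intro a
    rw [sum_apply_three (by simpa [Subtype.ext_iff] using hkj)
      (by simpa [Subtype.ext_iff] using hkl) (by simpa [Subtype.ext_iff] using hjl)
      (fun b c d => f a b c d), card_ne]
    norm_num [Nat.sub_sub]
  simp only [this, Finset.smul_sum]

end Split

/-! ### The indicator `Yf` and sums of its products over `Fin (2*m)` -/

def Yf (m : ℕ) (a b : Fin (2*m)) : ℕ :=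
  if (a:ℕ)+1 = (b:ℕ)+1 ∧ Even ((a:ℕ)+1) then 1 else 0

lemma ind_mul (P Q : Prop) [Decidable P] [Decidable Q] :
    (if P then (1:ℕ) else 0) * (if Q then 1 else 0) = if P ∧ Q then 1 else 0 := by
  by_cases hP : P <;> by_cases hQ : Q <;> simp [hP, hQ]

lemma count_even (m : ℕ) : (∑ a : Fin (2*m), if Even ((a:ℕ)+1) then (1:ℕ) else 0) = m := by
  rw [Fin.sum_univ_eq_sum_range (fun a => if Even (a+1) then (1:ℕ) else 0)]
  induction m with
  | zero => simp
  | succ k ih =>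
    rw [show 2*(k+1) = 2*k+1+1 by ring, Finset.sum_range_succ, Finset.sum_range_succ, ih]
    have h1 : ¬ Even (2*k+1) := by simp [Nat.even_add_one]
    have h2 : Even (2*k+1+1) := by simp [Nat.even_add_one, h1]
    simp [h1, h2]

lemma Yf_symm (m : ℕ) (a b : Fin (2*m)) : Yf m a b = Yf m b a := by
  unfold Yf
  refine if_congr ?_ rfl rfl
  constructor
  · rintro ⟨h1, h2⟩; exact ⟨h1.symm, h1 ▸ h2⟩
  · rintro ⟨h1, h2⟩; exact ⟨h1.symm, h1 ▸ h2⟩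

lemma Yf_sq (m : ℕ) (a b : Fin (2*m)) : Yf m a b * Yf m a b = Yf m a b := by
  unfold Yf; split <;> simp

lemma sum_pair_ind (m : ℕ) : (∑ a : Fin (2*m), ∑ b : Fin (2*m), Yf m a b) = m := by
  have key : ∀ a : Fin (2*m), (∑ b : Fin (2*m), Yf m a b)
      = if Even ((a:ℕ)+1) then (1:ℕ) else 0 := by
    intro a
    have h : ∀ b : Fin (2*m),
        ((a:ℕ)+1 = (b:ℕ)+1 ∧ Even ((a:ℕ)+1)) ↔ (b = a ∧ Even ((a:ℕ)+1)) := by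
      intro b
      constructor
      · rintro ⟨h1, h2⟩; exact ⟨by ext; omega, h2⟩
      · rintro ⟨rfl, h2⟩; exact ⟨rfl, h2⟩
    unfold Yf
    simp only [h, ite_and, Finset.sum_ite_eq', mem_univ, if_true]
  simp only [key, count_even]

lemma sum_T1 (m : ℕ) :
    (∑ a : Fin (2*m), ∑ b : Fin (2*m), ∑ c : Fin (2*m), Yf m a b * Yf m a c) = m := by
  unfold Yf
  simp only [ind_mul]
  have h : ∀ a b c : Fin (2*m),
      (((a:ℕ)+1 = (b:ℕ)+1 ∧ Even ((a:ℕ)+1)) ∧ ((a:ℕ)+1 = (c:ℕ)+1 ∧ Even ((a:ℕ)+1)))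
        ↔ (c = a ∧ (b = a ∧ Even ((a:ℕ)+1))) := by
    intro a b c
    constructor
    · rintro ⟨⟨h1, h2⟩, ⟨h3, _⟩⟩
      exact ⟨by ext; omega, by ext; omega, h2⟩
    · rintro ⟨rfl, rfl, h2⟩; exact ⟨⟨rfl, h2⟩, ⟨rfl, h2⟩⟩
  simp only [h, ite_and, Finset.sum_ite_eq', mem_univ, if_true, count_even]

lemma sum_T2 (m : ℕ) :
    (∑ a : Fin (2*m), ∑ b : Fin (2*m), ∑ c : Fin (2*m), Yf m a b * Yf m b c) = m := by
  unfold Yf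
  simp only [ind_mul]
  have h : ∀ a b c : Fin (2*m),
      (((a:ℕ)+1 = (b:ℕ)+1 ∧ Even ((a:ℕ)+1)) ∧ ((b:ℕ)+1 = (c:ℕ)+1 ∧ Even ((b:ℕ)+1)))
        ↔ (c = a ∧ (b = a ∧ Even ((a:ℕ)+1))) := by
    intro a b c
    constructor
    · rintro ⟨⟨h1, h2⟩, ⟨h3, _⟩⟩
      exact ⟨by ext; omega, by ext; omega, h2⟩
    · rintro ⟨rfl, rfl, h2⟩; exact ⟨⟨rfl, h2⟩, ⟨rfl, h2⟩⟩
  simp only [h, ite_and, Finset.sum_ite_eq', mem_univ, if_true, count_even]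

lemma sum_T4 (m : ℕ) :
    (∑ a : Fin (2*m), ∑ b : Fin (2*m), ∑ c : Fin (2*m), ∑ d : Fin (2*m),
      Yf m a b * Yf m c d) = m * m := by
  simp only [← Finset.mul_sum]
  simp only [← Finset.sum_mul]
  simp only [sum_pair_ind]

/-! ### `A`-values: sums over all words of products of two `Yf`s -/

section Avals
variable {n m : ℕ}

lemma A2 {i k : Fin n} (hik : i ≠ k) :
    ∑ w : Fin n → Fin (2*m), Yf m (w i) (w k) = (2*m)^(n-2) * m := by
  have h := sum_apply_two (β := Fin (2*m)) (M := ℕ) hik (fun a b => Yf m a b)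
  simpa [Fintype.card_fin, sum_pair_ind, smul_eq_mul] using h

lemma A2sq {i k : Fin n} (hik : i ≠ k) :
    ∑ w : Fin n → Fin (2*m), Yf m (w i) (w k) * Yf m (w i) (w k) = (2*m)^(n-2) * m := by
  simp only [Yf_sq]; exact A2 hik

lemma A3_1 {i k l : Fin n} (hik : i ≠ k) (hil : i ≠ l) (hkl : k ≠ l) :
    ∑ w : Fin n → Fin (2*m), Yf m (w i) (w k) * Yf m (w i) (w l) = (2*m)^(n-3) * m := by
  have h := sum_apply_three (β := Fin (2*m)) (M := ℕ) hik hil hkl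
    (fun a b c => Yf m a b * Yf m a c)
  simpa [Fintype.card_fin, sum_T1, smul_eq_mul] using h

lemma A3_2 {i k l : Fin n} (hik : i ≠ k) (hil : i ≠ l) (hkl : k ≠ l) :
    ∑ w : Fin n → Fin (2*m), Yf m (w i) (w k) * Yf m (w k) (w l) = (2*m)^(n-3) * m := by
  have h := sum_apply_three (β := Fin (2*m)) (M := ℕ) hik hil hkl
    (fun a b c => Yf m a b * Yf m b c)
  simpa [Fintype.card_fin, sum_T2, smul_eq_mul] using h

lemma A4 {i k j l : Fin n} (hik : i ≠ k) (hij : i ≠ j) (hil : i ≠ l)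
    (hkj : k ≠ j) (hkl : k ≠ l) (hjl : j ≠ l) :
    ∑ w : Fin n → Fin (2*m), Yf m (w i) (w k) * Yf m (w j) (w l)
      = (2*m)^(n-4) * (m * m) := by
  have h := sum_apply_four (β := Fin (2*m)) (M := ℕ) hik hij hil hkj hkl hjl
    (fun a b c d => Yf m a b * Yf m c d)
  simpa [Fintype.card_fin, sum_T4, smul_eq_mul] using h

end Avals

section Comb
variable {n : ℕ} {M : Type*} [AddCommMonoid M]

lemma sum_ite_ne (i : Fin n) (f : Fin n → M) :
    ∑ k, (if i = k then 0 else f k) = ∑ k ∈ univ.erase i, f k := by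
  rw [← Finset.add_sum_erase _ _ (Finset.mem_univ i), if_pos rfl, zero_add]
  exact Finset.sum_congr rfl fun k hk => if_neg fun h => (Finset.mem_erase.1 hk).1 h.symm

lemma sum_ite_ne_const (i : Fin n) (c : M) :
    ∑ k : Fin n, (if i = k then 0 else c) = (n-1) • c := by
  rw [sum_ite_ne, Finset.sum_const, Finset.card_erase_of_mem (mem_univ i), card_univ,
    Fintype.card_fin]

lemma sum_split_two {i k : Fin n} (hik : i ≠ k) (f : Fin n → M) :
    ∑ j, f j = f i + f k + ∑ j ∈ univ \ {i, k}, f j := by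
  have h := Finset.sum_sdiff (f := f) (subset_univ ({i, k} : Finset (Fin n)))
  rw [← h, Finset.sum_pair hik, add_comm]

lemma sum_split_three {i k j : Fin n} (hik : i ≠ k) (hij : i ≠ j) (hkj : k ≠ j)
    (f : Fin n → M) :
    ∑ l, f l = f i + f k + f j + ∑ l ∈ univ \ {i, k, j}, f l := by
  have h := Finset.sum_sdiff (f := f) (subset_univ ({i, k, j} : Finset (Fin n)))
  rw [← h, Finset.sum_insert (by simp [hik, hij]), Finset.sum_pair hkj, add_comm,
    ← add_assoc]

lemma card_rest_two {i k : Fin n} (hik : i ≠ k) :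
    (univ \ {i, k} : Finset (Fin n)).card = n - 2 := by
  rw [Finset.card_sdiff_of_subset (subset_univ _), Finset.card_pair hik, card_univ, Fintype.card_fin]

lemma card_rest_three {i k j : Fin n} (hik : i ≠ k) (hij : i ≠ j) (hkj : k ≠ j) :
    (univ \ {i, k, j} : Finset (Fin n)).card = n - 3 := by
  rw [Finset.card_sdiff_of_subset (subset_univ _), card_univ, Fintype.card_fin]
  rw [Finset.card_insert_of_notMem (by simp [hik, hij]), Finset.card_pair hkj]

lemma double_sum_eq (g : Fin n → Fin n → M) (hsymm : ∀ i k, g i k = g k i) :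
    ∑ i, ∑ k, (if i = k then (0:M) else g i k)
      = (∑ p ∈ univ.filter (fun p : Fin n × Fin n => p.1 < p.2), g p.1 p.2)
        + ∑ p ∈ univ.filter (fun p : Fin n × Fin n => p.1 < p.2), g p.1 p.2 := by
  rw [← Finset.sum_product' (s := univ) (t := univ)
    (f := fun i k => if i = k then (0:M) else g i k), Finset.univ_product_univ]
  rw [← Finset.sum_filter_add_sum_filter_not univ (fun p : Fin n × Fin n => p.1 < p.2)]
  congr 1
  · exact Finset.sum_congr rfl fun p hp => if_neg (ne_of_lt (mem_filter.1 hp).2)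
  · rw [← Finset.sum_filter_add_sum_filter_not
      (univ.filter (fun p : Fin n × Fin n => ¬ p.1 < p.2)) (fun p => p.2 < p.1)]
    have hz : ∑ p ∈ (univ.filter (fun p : Fin n × Fin n => ¬ p.1 < p.2)).filter
        (fun p => ¬ p.2 < p.1), (if p.1 = p.2 then (0:M) else g p.1 p.2) = 0 := by
      refine Finset.sum_eq_zero fun p hp => ?_
      simp only [mem_filter] at hp
      exact if_pos (le_antisymm (not_lt.1 hp.2) (not_lt.1 hp.1.2))
    rw [hz, add_zero]
    refine Finset.sum_nbij' Prod.swap Prod.swap ?_ ?_ ?_ ?_ ?_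
    · intro p hp
      simp only [mem_filter, mem_univ, true_and] at hp ⊢
      exact hp.2
    · intro p hp
      simp only [mem_filter, mem_univ, true_and] at hp ⊢
      exact ⟨not_lt.2 (le_of_lt hp), hp⟩
    · intro p _; rfl
    · intro p _; rfl
    · intro p hp
      simp only [mem_filter, mem_univ, true_and] at hp
      rw [if_neg (ne_of_gt hp.2)]
      exact hsymm p.2 p.1 ▸ rfl

end Comb

section Words
variable {n m : ℕ}

def Gf {n m : ℕ} (w : Fin n → Fin (2*m)) (i k : Fin n) : ℕ :=
  if i = k then 0 else Yf m (w i) (w k)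


lemma S1_eq :
    ∑ w : Fin n → Fin (2*m), ∑ i, ∑ k, Gf w i k = n * ((n-1) * ((2*m)^(n-2)*m)) := by
  rw [Finset.sum_comm]
  have key : ∀ i : Fin n, (∑ w : Fin n → Fin (2*m), ∑ k, Gf w i k)
      = (n-1) * ((2*m)^(n-2)*m) := by
    intro i
    rw [Finset.sum_comm]
    have hk : ∀ k : Fin n, (∑ w : Fin n → Fin (2*m), Gf w i k)
        = if i = k then 0 else (2*m)^(n-2)*m := by
      intro k
      by_cases h : i = k
      · simp [Gf, h]
      · simp only [Gf, if_neg h]; exact A2 h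
    simp only [hk]
    rw [sum_ite_ne_const i ((2*m)^(n-2)*m), smul_eq_mul]
  simp only [key]
  rw [Finset.sum_const, card_univ, Fintype.card_fin, smul_eq_mul]

lemma Einner {i k : Fin n} (hik : i ≠ k) :
    ∑ w : Fin n → Fin (2*m), ∑ j, ∑ l, Gf w i k * Gf w j l
      = 2*((2*m)^(n-2)*m) + 2*((n-2)*((2*m)^(n-3)*m))
        + (n-2)*(2*((2*m)^(n-3)*m) + (n-3)*((2*m)^(n-4)*(m*m))) := by
  rw [Finset.sum_comm]
  have hb : ∀ j : Fin n, (∑ w : Fin n → Fin (2*m), ∑ l, Gf w i k * Gf w j l)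
      = ∑ l, ∑ w : Fin n → Fin (2*m), Gf w i k * Gf w j l :=
    fun j => Finset.sum_comm
  simp only [hb]
  rw [sum_split_two hik
    (fun j => ∑ l, ∑ w : Fin n → Fin (2*m), Gf w i k * Gf w j l)]
  have hGik : ∀ w : Fin n → Fin (2*m), Gf w i k = Yf m (w i) (w k) :=
    fun w => if_neg hik
  have branch1 : (∑ l, ∑ w : Fin n → Fin (2*m), Gf w i k * Gf w i l)
      = (2*m)^(n-2)*m + (n-2)*((2*m)^(n-3)*m) := by
    rw [sum_split_two hik (fun l => ∑ w : Fin n → Fin (2*m), Gf w i k * Gf w i l)]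
    have t1 : (∑ w : Fin n → Fin (2*m), Gf w i k * Gf w i i) = 0 := by
      simp [Gf]
    have t2 : (∑ w : Fin n → Fin (2*m), Gf w i k * Gf w i k) = (2*m)^(n-2)*m := by
      simp only [hGik]; exact A2sq hik
    have t3 : (∑ l ∈ univ \ {i, k}, ∑ w : Fin n → Fin (2*m), Gf w i k * Gf w i l)
        = (n-2)*((2*m)^(n-3)*m) := by
      have hval : ∀ l ∈ univ \ ({i, k} : Finset (Fin n)),
          (∑ w : Fin n → Fin (2*m), Gf w i k * Gf w i l) = (2*m)^(n-3)*m := by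
        intro l hl
        simp only [Finset.mem_sdiff, Finset.mem_insert, Finset.mem_singleton] at hl
        push_neg at hl
        simp only [Gf, if_neg hik, if_neg hl.2.1.symm]
        exact A3_1 hik (Ne.symm hl.2.1) (Ne.symm hl.2.2)
      rw [Finset.sum_congr rfl hval, Finset.sum_const, card_rest_two hik, smul_eq_mul]
    rw [t1, t2, t3, zero_add]
  have branch2 : (∑ l, ∑ w : Fin n → Fin (2*m), Gf w i k * Gf w k l)
      = (2*m)^(n-2)*m + (n-2)*((2*m)^(n-3)*m) := by
    rw [sum_split_two hik (fun l => ∑ w : Fin n → Fin (2*m), Gf w i k * Gf w k l)]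
    have t1 : (∑ w : Fin n → Fin (2*m), Gf w i k * Gf w k i) = (2*m)^(n-2)*m := by
      have : ∀ w : Fin n → Fin (2*m), Gf w i k * Gf w k i
          = Yf m (w i) (w k) * Yf m (w i) (w k) := by
        intro w
        rw [hGik, Gf, if_neg (Ne.symm hik), Yf_symm m (w k) (w i)]
      simp only [this]; exact A2sq hik
    have t2 : (∑ w : Fin n → Fin (2*m), Gf w i k * Gf w k k) = 0 := by simp [Gf]
    have t3 : (∑ l ∈ univ \ {i, k}, ∑ w : Fin n → Fin (2*m), Gf w i k * Gf w k l)
        = (n-2)*((2*m)^(n-3)*m) := by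
      have hval : ∀ l ∈ univ \ ({i, k} : Finset (Fin n)),
          (∑ w : Fin n → Fin (2*m), Gf w i k * Gf w k l) = (2*m)^(n-3)*m := by
        intro l hl
        simp only [Finset.mem_sdiff, Finset.mem_insert, Finset.mem_singleton] at hl
        push_neg at hl
        simp only [Gf, if_neg hik, if_neg hl.2.2.symm]
        exact A3_2 hik (Ne.symm hl.2.1) (Ne.symm hl.2.2)
      rw [Finset.sum_congr rfl hval, Finset.sum_const, card_rest_two hik, smul_eq_mul]
    rw [t1, t2, t3, add_zero]
  have branch3 : (∑ j ∈ univ \ {i, k}, ∑ l, ∑ w : Fin n → Fin (2*m),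
        Gf w i k * Gf w j l)
      = (n-2)*(2*((2*m)^(n-3)*m) + (n-3)*((2*m)^(n-4)*(m*m))) := by
    have hval : ∀ j ∈ univ \ ({i, k} : Finset (Fin n)),
        (∑ l, ∑ w : Fin n → Fin (2*m), Gf w i k * Gf w j l)
          = 2*((2*m)^(n-3)*m) + (n-3)*((2*m)^(n-4)*(m*m)) := by
      intro j hj
      simp only [Finset.mem_sdiff, Finset.mem_insert, Finset.mem_singleton] at hj
      push_neg at hj
      have hij : i ≠ j := Ne.symm hj.2.1
      have hkj : k ≠ j := Ne.symm hj.2.2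
      rw [sum_split_three hik hij hkj
        (fun l => ∑ w : Fin n → Fin (2*m), Gf w i k * Gf w j l)]
      have t1 : (∑ w : Fin n → Fin (2*m), Gf w i k * Gf w j i) = (2*m)^(n-3)*m := by
        have : ∀ w : Fin n → Fin (2*m), Gf w i k * Gf w j i
            = Yf m (w i) (w k) * Yf m (w i) (w j) := by
          intro w
          rw [hGik, Gf, if_neg (Ne.symm hij), Yf_symm m (w j) (w i)]
        simp only [this]; exact A3_1 hik hij hkj
      have t2 : (∑ w : Fin n → Fin (2*m), Gf w i k * Gf w j k) = (2*m)^(n-3)*m := by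
        have : ∀ w : Fin n → Fin (2*m), Gf w i k * Gf w j k
            = Yf m (w i) (w k) * Yf m (w k) (w j) := by
          intro w
          rw [hGik, Gf, if_neg (Ne.symm hkj), Yf_symm m (w j) (w k)]
        simp only [this]; exact A3_2 hik hij hkj
      have t3 : (∑ w : Fin n → Fin (2*m), Gf w i k * Gf w j j) = 0 := by simp [Gf]
      have t4 : (∑ l ∈ univ \ {i, k, j}, ∑ w : Fin n → Fin (2*m), Gf w i k * Gf w j l)
          = (n-3)*((2*m)^(n-4)*(m*m)) := by
        have hval4 : ∀ l ∈ univ \ ({i, k, j} : Finset (Fin n)),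
            (∑ w : Fin n → Fin (2*m), Gf w i k * Gf w j l) = (2*m)^(n-4)*(m*m) := by
          intro l hl
          simp only [Finset.mem_sdiff, Finset.mem_insert, Finset.mem_singleton] at hl
          push_neg at hl
          have hil : i ≠ l := Ne.symm hl.2.1
          have hkl : k ≠ l := Ne.symm hl.2.2.1
          have hjl : j ≠ l := Ne.symm hl.2.2.2
          simp only [Gf, if_neg hik, if_neg hjl]
          exact A4 hik hij hil hkj hkl hjl
        rw [Finset.sum_congr rfl hval4, Finset.sum_const,
          card_rest_three hik hij hkj, smul_eq_mul]
      rw [t1, t2, t3, t4, add_zero]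
      ring
    rw [Finset.sum_congr rfl hval, Finset.sum_const, card_rest_two hik, smul_eq_mul]
  rw [branch1, branch2, branch3]
  ring

lemma S2_eq :
    ∑ w : Fin n → Fin (2*m), (∑ i, ∑ k, Gf w i k) * (∑ j, ∑ l, Gf w j l)
      = n * ((n-1) * (2*((2*m)^(n-2)*m) + 2*((n-2)*((2*m)^(n-3)*m))
        + (n-2)*(2*((2*m)^(n-3)*m) + (n-3)*((2*m)^(n-4)*(m*m))))) := by
  have expand : ∀ w : Fin n → Fin (2*m),
      (∑ i, ∑ k, Gf w i k) * (∑ j, ∑ l, Gf w j l)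
        = ∑ i, ∑ k, ∑ j, ∑ l, Gf w i k * Gf w j l := by
    intro w
    rw [Finset.sum_mul]
    refine Finset.sum_congr rfl fun i _ => ?_
    rw [Finset.sum_mul]
    refine Finset.sum_congr rfl fun k _ => ?_
    rw [Finset.mul_sum]
    refine Finset.sum_congr rfl fun j _ => ?_
    rw [Finset.mul_sum]
  simp only [expand]
  rw [Finset.sum_comm]
  have step : ∀ i : Fin n, (∑ w : Fin n → Fin (2*m), ∑ k, ∑ j, ∑ l, Gf w i k * Gf w j l)
      = ∑ k, ∑ w : Fin n → Fin (2*m), ∑ j, ∑ l, Gf w i k * Gf w j l :=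
    fun i => Finset.sum_comm
  simp only [step]
  have key : ∀ i k : Fin n, (∑ w : Fin n → Fin (2*m), ∑ j, ∑ l, Gf w i k * Gf w j l)
      = if i = k then 0 else (2*((2*m)^(n-2)*m) + 2*((n-2)*((2*m)^(n-3)*m))
        + (n-2)*(2*((2*m)^(n-3)*m) + (n-3)*((2*m)^(n-4)*(m*m)))) := by
    intro i k
    by_cases h : i = k
    · simp [Gf, h]
    · rw [if_neg h]; exact Einner h
  simp only [key]
  have : ∀ i : Fin n, (∑ k : Fin n, if i = k then 0 else (2*((2*m)^(n-2)*m)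
      + 2*((n-2)*((2*m)^(n-3)*m))
      + (n-2)*(2*((2*m)^(n-3)*m) + (n-3)*((2*m)^(n-4)*(m*m)))))
      = (n-1) * (2*((2*m)^(n-2)*m) + 2*((n-2)*((2*m)^(n-3)*m))
      + (n-2)*(2*((2*m)^(n-3)*m) + (n-3)*((2*m)^(n-4)*(m*m)))) := by
    intro i
    rw [sum_ite_ne_const i _, smul_eq_mul]
  simp only [this]
  rw [Finset.sum_const, card_univ, Fintype.card_fin, smul_eq_mul]

end Words



lemma final_alg (n m : ℕ) (hm : 1 ≤ m) (S1 S2 : ℕ)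
    (h1 : 2 * S1 = n * ((n-1) * ((2*m)^(n-2)*m)))
    (h2 : 4 * S2 = n * ((n-1) * (2*((2*m)^(n-2)*m) + 2*((n-2)*((2*m)^(n-3)*m))
        + (n-2)*(2*((2*m)^(n-3)*m) + (n-3)*((2*m)^(n-4)*(m*m)))))) :
    (S2:ℝ)/((2*m:ℝ))^n - ((S1:ℝ)/((2*m:ℝ))^n)^2
      = n*((n:ℝ)-1)*(2*n+4*m-5)/(32*m^2) := by
  have hm0 : (m:ℝ) ≠ 0 := Nat.cast_ne_zero.2 (by omega)
  have hK0 : (2*(m:ℝ)) ≠ 0 := by positivity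
  match n with
  | 0 =>
    have hS1 : S1 = 0 := by omega
    have hS2 : S2 = 0 := by omega
    subst hS1 hS2
    norm_num
  | 1 =>
    simp only [show (1:ℕ)-1 = 0 by rfl, Nat.zero_mul, Nat.mul_zero] at h1 h2
    have hS1 : S1 = 0 := by omega
    have hS2 : S2 = 0 := by omega
    subst hS1 hS2
    norm_num
  | 2 =>
    simp only [show (2:ℕ)-1 = 1 by rfl, show (2:ℕ)-2 = 0 by rfl, show (2:ℕ)-3 = 0 by rfl,
      show (2:ℕ)-4 = 0 by rfl, pow_zero] at h1 h2
    have h1' := congrArg (fun t : ℕ => (t:ℝ)) h1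
    have h2' := congrArg (fun t : ℕ => (t:ℝ)) h2
    push_cast at h1' h2'
    have hS1 : (S1:ℝ) = m := by linarith
    have hS2 : (S2:ℝ) = m := by linarith
    rw [hS1, hS2]
    field_simp
    ring
  | 3 =>
    simp only [show (3:ℕ)-1 = 2 by rfl, show (3:ℕ)-2 = 1 by rfl, show (3:ℕ)-3 = 0 by rfl,
      show (3:ℕ)-4 = 0 by rfl, pow_zero, pow_one] at h1 h2
    have h1' := congrArg (fun t : ℕ => (t:ℝ)) h1
    have h2' := congrArg (fun t : ℕ => (t:ℝ)) h2
    push_cast at h1' h2'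
    have hS1 : (S1:ℝ) = 3*(2*m*m) := by linarith
    have hS2 : (S2:ℝ) = (3*(2*(2*(2*(m:ℝ)*m) + 2*m + 2*m)))/4 := by linarith
    rw [hS1, hS2]
    field_simp
    ring
  | (N+4) =>
    have e1 : N+4-1 = N+3 := rfl
    have e2 : N+4-2 = N+2 := rfl
    have e3 : N+4-3 = N+1 := rfl
    have e4 : N+4-4 = N := rfl
    simp only [e1, e2, e3, e4] at h1 h2
    have h1' := congrArg (fun t : ℕ => (t:ℝ)) h1
    have h2' := congrArg (fun t : ℕ => (t:ℝ)) h2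
    push_cast at h1' h2'
    have hS1 : (S1:ℝ) = ((N:ℝ)+4)*(((N:ℝ)+3)*((2*m)^(N+2)*m))/2 := by linarith
    have hS2 : (S2:ℝ) = ((N:ℝ)+4)*(((N:ℝ)+3)*(2*((2*(m:ℝ))^(N+2)*m)
        + 2*(((N:ℝ)+2)*((2*m)^(N+1)*m))
        + ((N:ℝ)+2)*(2*((2*m)^(N+1)*m) + ((N:ℝ)+1)*((2*m)^N*(m*m)))))/4 := by linarith
    rw [hS1, hS2]
    push_cast
    have hpow : ∀ j : ℕ, (2*(m:ℝ))^j ≠ 0 := fun j => pow_ne_zero j hK0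
    field_simp
    ring

lemma uniformM_prob (α : Type*) [Fintype α] [MeasurableSpace α] [MeasurableSingletonClass α]
    [Nonempty α] : IsProbabilityMeasure (uniformM α) := by
  constructor
  simp only [uniformM, Measure.smul_apply, Measure.count_univ, smul_eq_mul]
  rw [ENat.card_eq_coe_fintype_card, ENat.toENNReal_coe]
  rw [ENNReal.inv_mul_cancel (by exact_mod_cast Fintype.card_ne_zero) (by simp)]

lemma integral_uniformM (α : Type*) [Fintype α] [MeasurableSpace α] [MeasurableSingletonClass α]
    [Nonempty α] (f : α → ℝ) :
    ∫ x, f x ∂(uniformM α) = (∑ x, f x) / Fintype.card α := by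
  have : IsProbabilityMeasure (uniformM α) := uniformM_prob α
  rw [integral_fintype (Integrable.of_finite)]
  have h1 : ∀ x : α, (uniformM α).real {x} = (Fintype.card α : ℝ)⁻¹ := by
    intro x
    simp [uniformM, Measure.real, Measure.count_singleton, ENNReal.toReal_inv]
  simp only [h1, smul_eq_mul]
  rw [← Finset.mul_sum, inv_mul_eq_div]

lemma variance_uniformM (α : Type*) [Fintype α] [MeasurableSpace α] [MeasurableSingletonClass α]
    [Nonempty α] (f : α → ℝ) :
    variance f (uniformM α) =
      (∑ x, f x ^ 2) / Fintype.card α - ((∑ x, f x) / Fintype.card α) ^ 2 := by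
  have : IsProbabilityMeasure (uniformM α) := uniformM_prob α
  rw [variance_eq_sub (by exact MemLp.of_discrete), integral_uniformM, integral_uniformM]
  rfl

/-- For `n ≥ 1`, `m ≥ 1`, with `X_1, …, X_n` i.i.d. uniform on `{1,…,2m}`,
the statistic `C_{n,m} = Σ_{1≤i<k≤n} 1{X_i = X_k and X_i even}` has variance
`n(n−1)(2n + 4m − 5)/(32 m²)`. -/
theorem variance_C (n m : ℕ) (hn : 1 ≤ n) (hm : 1 ≤ m) :
    variance (fun w : Fin n → Fin (2*m) =>
        ((∑ p ∈ (Finset.univ : Finset (Fin n × Fin n)).filter (fun p => p.1 < p.2),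
          if Xval w p.1 = Xval w p.2 ∧ Even (Xval w p.1) then (1 : ℕ) else 0 : ℕ) : ℝ))
      (uniformM (Fin n → Fin (2*m))) =
    n * (n - 1) * (2 * n + 4 * m - 5) / (32 * m^2) := by
  classical
  have hb : (0:ℕ) < 2*m := by omega
  have hβ : Nonempty (Fin (2*m)) := ⟨⟨0, hb⟩⟩
  have hV : Nonempty (Fin n → Fin (2*m)) := ⟨fun _ => hβ.some⟩
  have hXY : (fun w : Fin n → Fin (2*m) =>
      ((∑ p ∈ (Finset.univ : Finset (Fin n × Fin n)).filter (fun p => p.1 < p.2),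
        if Xval w p.1 = Xval w p.2 ∧ Even (Xval w p.1) then (1 : ℕ) else 0 : ℕ) : ℝ))
      = (fun w : Fin n → Fin (2*m) =>
      ((∑ p ∈ (Finset.univ : Finset (Fin n × Fin n)).filter (fun p => p.1 < p.2),
        Yf m (w p.1) (w p.2) : ℕ) : ℝ)) := rfl
  rw [hXY, variance_uniformM]
  have hcard : ((Fintype.card (Fin n → Fin (2*m)) : ℕ) : ℝ) = (2*(m:ℝ))^n := by
    simp only [Fintype.card_fun, Fintype.card_fin]
    push_cast
    ring
  rw [hcard]
  set Cn : (Fin n → Fin (2*m)) → ℕ := fun w =>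
    ∑ p ∈ (Finset.univ : Finset (Fin n × Fin n)).filter (fun p => p.1 < p.2),
      Yf m (w p.1) (w p.2) with hCn
  have hD : ∀ w : Fin n → Fin (2*m), (∑ i, ∑ k, Gf w i k) = Cn w + Cn w := by
    intro w
    simp only [Gf, hCn]
    exact double_sum_eq (fun i k => Yf m (w i) (w k)) (fun i k => Yf_symm m (w i) (w k))
  have h1 : 2 * (∑ w : Fin n → Fin (2*m), Cn w)
      = n * ((n-1) * ((2*m)^(n-2)*m)) := by
    rw [Finset.mul_sum, ← S1_eq (n := n) (m := m)]
    refine Finset.sum_congr rfl fun w _ => ?_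
    rw [hD w, two_mul]
  have h2 : 4 * (∑ w : Fin n → Fin (2*m), Cn w * Cn w)
      = n * ((n-1) * (2*((2*m)^(n-2)*m) + 2*((n-2)*((2*m)^(n-3)*m))
        + (n-2)*(2*((2*m)^(n-3)*m) + (n-3)*((2*m)^(n-4)*(m*m))))) := by
    rw [Finset.mul_sum, ← S2_eq (n := n) (m := m)]
    refine Finset.sum_congr rfl fun w _ => ?_
    rw [hD w]
    ring
  have hsum1 : (∑ w : Fin n → Fin (2*m), ((Cn w : ℕ) : ℝ))
      = ((∑ w : Fin n → Fin (2*m), Cn w : ℕ) : ℝ) := by push_cast; rfl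
  have hsum2 : (∑ w : Fin n → Fin (2*m), ((Cn w : ℕ) : ℝ)^2)
      = ((∑ w : Fin n → Fin (2*m), Cn w * Cn w : ℕ) : ℝ) := by
    push_cast
    refine Finset.sum_congr rfl fun w _ => ?_
    ring
  rw [hsum1, hsum2]
  exact final_alg n m hm _ _ h1 h2
end
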